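/- Let V be a finite nonempty set, let r : V × V → ℝ satisfy r(x,y) = r(y,x) ≥ 0 and r(x,x) = 0 for all x, y ∈ V, and set r(x) = Σ_{y∈V} r(x,y). Let b > 0 and let A be the (V⊕V)×(V⊕V) real matrix given in block form by A = fromBlocks A1 A2 0 0, where A1(x,x) = b − r(x), A1(x,y) = r(x,y) for x ≠ y, and A2(x,y) = r(x,y). Then for every t ≥ 0 and every y ∈ V: Σ_{x∈V} exp(tA)(inl x, inl y) = e^{bt} and Σ_{x∈V} exp(tA)(inl x, inr y) = b^{-1}(e^{bt} − 1) · r(y). -/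

import Mathlib

open Matrix

/-- The computation `z₀ e^{At} = M (e^{bt},…; b⁻¹(e^{bt}−1) r(·),…)` from the proof of
Lemma 2.2: for the generator `A = fromBlocks A1 A2 0 0` of the first-moment semigroup of
the branching process (alive types in the first copy of `V`, ghost types in the second),
the column sums of `exp (t • A)` over the alive rows are `e^{bt}` in the alive columns and
`b⁻¹(e^{bt}−1) r(y)` in the ghost columns. -/
theorem stmt_4 {V : Type*} [Fintype V] [DecidableEq V] [Nonempty V]
    (r : V → V → ℝ) (hsymm : ∀ x y, r x y = r y x) (hnonneg : ∀ x y, 0 ≤ r x y)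
    (hdiag : ∀ x, r x x = 0) (b : ℝ) (hb : 0 < b) (t : ℝ) (ht : 0 ≤ t) (y : V) :
    let A1 : Matrix V V ℝ := fun x z => if x = z then b - ∑ w : V, r x w else r x z
    let A2 : Matrix V V ℝ := fun x z => r x z
    let A : Matrix (V ⊕ V) (V ⊕ V) ℝ :=
      Matrix.fromBlocks A1 A2 (0 : Matrix V V ℝ) (0 : Matrix V V ℝ)
    (∑ x : V, NormedSpace.exp (t • A) (Sum.inl x) (Sum.inl y) = Real.exp (b * t)) ∧
    (∑ x : V, NormedSpace.exp (t • A) (Sum.inl x) (Sum.inr y)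
        = b⁻¹ * (Real.exp (b * t) - 1) * ∑ w : V, r y w) := by
  classical
  intro A1 A2 A
  set e : (V ⊕ V) → ℝ := Sum.elim 1 0 with he_def
  set g : (V ⊕ V) → ℝ := Sum.elim 0 (fun x => ∑ w : V, r x w) with hg_def
  have hsum1 : ∀ z, ∑ x : V, A1 x z = b := by
    intro z
    have : ∑ x : V, A1 x z
        = ∑ x : V, ((if x = z then b - ∑ w : V, r z w else 0) + r x z) := by
      refine Finset.sum_congr rfl fun x _ => ?_
      by_cases h : x = z <;> simp [A1, h, hdiag]
    rw [this, Finset.sum_add_distrib,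
      Finset.sum_ite_eq' Finset.univ z (fun _ => b - ∑ w : V, r z w)]
    simp [Finset.sum_congr rfl fun x (_ : x ∈ Finset.univ) => hsymm x z]
  have heA : e ᵥ* A = b • e + g := by
    funext j
    cases j with
    | inl z =>
      simp [Matrix.vecMul, dotProduct, Fintype.sum_sum_type, A, he_def, hg_def, hsum1 z]
    | inr z =>
      simp [Matrix.vecMul, dotProduct, Fintype.sum_sum_type, A, A2, he_def, hg_def, Matrix.fromBlocks_apply₁₂,
        Finset.sum_congr rfl fun x (_ : x ∈ Finset.univ) => hsymm x z]
      exact Finset.sum_congr rfl fun x _ => hsymm x z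
  have hgA : g ᵥ* A = 0 := by
    funext j
    cases j <;>
      simp [Matrix.vecMul, dotProduct, Fintype.sum_sum_type, A, he_def, hg_def]
  have hpow : ∀ n : ℕ, e ᵥ* (A ^ (n + 1)) = (b ^ (n + 1)) • e + (b ^ n) • g := by
    intro n
    induction n with
    | zero => simpa using heA
    | succ n ih =>
      rw [pow_succ, ← Matrix.vecMul_vecMul, ih, Matrix.add_vecMul,
        Matrix.smul_vecMul, Matrix.smul_vecMul, heA, hgA, smul_zero, add_zero, smul_add,
        smul_smul]
      rw [← pow_succ]
  have hsmul : ∀ (c : ℝ) (N : Matrix (V ⊕ V) (V ⊕ V) ℝ), e ᵥ* (c • N) = c • (e ᵥ* N) := by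
    intro c N
    funext j
    simp [Matrix.vecMul, dotProduct, Finset.mul_sum, mul_add, mul_left_comm]
  -- the exponential series, summed against `e`
  have hMpow : ∀ n : ℕ, e ᵥ* ((t • A) ^ n)
      = ((b * t) ^ n) • e + (b⁻¹ * ((b * t) ^ n - if n = 0 then 1 else 0)) • g := by
    intro n
    cases n with
    | zero => simp [Matrix.vecMul_one]
    | succ n =>
      rw [smul_pow, hsmul, hpow n, smul_add, smul_smul, smul_smul]
      have h1 : t ^ (n + 1) * b ^ (n + 1) = (b * t) ^ (n + 1) := by
        rw [mul_pow]; ring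
      have h2 : t ^ (n + 1) * b ^ n
          = b⁻¹ * ((b * t) ^ (n + 1) - if n + 1 = 0 then 1 else 0) := by
        simp only [Nat.succ_ne_zero, if_false, sub_zero, mul_pow, pow_succ]
        field_simp
      rw [h1, h2]
  -- the continuous linear map `N ↦ e ᵥ* N`
  let L : Matrix (V ⊕ V) (V ⊕ V) ℝ →ₗ[ℝ] ((V ⊕ V) → ℝ) :=
    { toFun := fun N => e ᵥ* N
      map_add' := fun N1 N2 => Matrix.vecMul_add N1 N2 e
      map_smul' := fun c N => by simpa using hsmul c N }
  let Lc : Matrix (V ⊕ V) (V ⊕ V) ℝ →L[ℝ] ((V ⊕ V) → ℝ) :=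
    { toLinearMap := L, cont := L.continuous_of_finiteDimensional }
  have hsummable : Summable (fun n : ℕ => ((n.factorial : ℝ))⁻¹ • (t • A) ^ n) := by
    letI : SeminormedRing (Matrix (V ⊕ V) (V ⊕ V) ℝ) := Matrix.linftyOpSemiNormedRing
    letI : NormedRing (Matrix (V ⊕ V) (V ⊕ V) ℝ) := Matrix.linftyOpNormedRing
    letI : NormedAlgebra ℝ (Matrix (V ⊕ V) (V ⊕ V) ℝ) := Matrix.linftyOpNormedAlgebra
    exact NormedSpace.expSeries_summable' (𝕂 := ℝ) (t • A)
  have hmain : e ᵥ* NormedSpace.exp (t • A)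
      = ∑' n : ℕ, ((n.factorial : ℝ))⁻¹ • (e ᵥ* ((t • A) ^ n)) := by
    have h := Lc.map_tsum hsummable
    rw [NormedSpace.exp_eq_tsum ℝ]
    convert h using 2 with n
    simp [Lc, L]
    funext n
    simp [Lc, L]
  have hs2 : Summable (fun n : ℕ => ((n.factorial : ℝ))⁻¹ • (e ᵥ* ((t • A) ^ n))) := by
    have := hsummable.map (Lc : Matrix (V ⊕ V) (V ⊕ V) ℝ →+ ((V ⊕ V) → ℝ)) Lc.continuous
    convert this using 2 with n
    simp [Function.comp, Lc, L]
  have hcol : ∀ (N : Matrix (V ⊕ V) (V ⊕ V) ℝ) (c : V ⊕ V),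
      ∑ x : V, N (Sum.inl x) c = (e ᵥ* N) c := by
    intro N c
    simp [Matrix.vecMul, dotProduct, Fintype.sum_sum_type, he_def]
  have hexpR : Real.exp (b * t) = ∑' n : ℕ, ((n.factorial : ℝ))⁻¹ * (b * t) ^ n := by
    rw [Real.exp_eq_exp_ℝ, NormedSpace.exp_eq_tsum ℝ]
    simp [smul_eq_mul]
  have hsumR : Summable (fun n : ℕ => ((n.factorial : ℝ))⁻¹ * (b * t) ^ n) := by
    simpa [smul_eq_mul] using NormedSpace.expSeries_summable' (𝕂 := ℝ) (b * t)
  have hsumite : Summable (fun n : ℕ => if n = 0 then (1 : ℝ) else 0) := by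
    apply summable_of_ne_finset_zero (s := ({0} : Finset ℕ))
    intro n hn
    simp only [Finset.mem_singleton] at hn
    simp [hn]
  constructor
  · rw [Finset.sum_congr rfl fun x _ => rfl, hcol, hmain, tsum_apply hs2]
    rw [hexpR]
    refine tsum_congr fun n => ?_
    rw [hMpow n]
    simp [he_def, hg_def, smul_eq_mul]
  · rw [Finset.sum_congr rfl fun x _ => rfl, hcol, hmain, tsum_apply hs2]
    have : ∀ n : ℕ, (((n.factorial : ℝ))⁻¹ • (e ᵥ* ((t • A) ^ n))) (Sum.inr y)
        = (b⁻¹ * ∑ w : V, r y w) *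
            (((n.factorial : ℝ))⁻¹ * (b * t) ^ n - if n = 0 then 1 else 0) := by
      intro n
      rw [hMpow n]
      cases n with
      | zero => simp [he_def, hg_def]
      | succ n =>
        simp only [Nat.succ_ne_zero, if_false, sub_zero, Pi.smul_apply, Pi.add_apply,
          he_def, hg_def, Sum.elim_inr, Sum.elim_inl, Pi.zero_apply, smul_eq_mul]
        ring
    rw [tsum_congr this, tsum_mul_left, Summable.tsum_sub hsumR hsumite, tsum_ite_eq, ← hexpR]
    ring
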